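/- Let d ≥ 1, let R ⊆ ℤ^d \ {0} be a finite set, let q ≥ 2, and let (c_n)_{n≥1} be a sequence of real numbers such that for every n ≥ 1, every storage code on the finite directed graph Z^d_{R,n} over an alphabet of size q has rate at most c_n. Then every R-recoverable system X on ℤ^d over an alphabet of size q satisfies R_q(X) ≤ limsup_{n→∞} c_n. -/

import Mathlib

def IsStorageCode {V Q : Type*} (E : V → V → Prop) (C : Set (V → Q)) : Prop :=
  ∀ v : V, ∃ f : (V → Q) → Q,
    (∀ x y : V → Q, (∀ u : V, E v u → x u = y u) → f x = f y) ∧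
    ∀ x ∈ C, f x = x v

/-- An `R`-recoverable system on `ℤ^d`: every symbol `x_v` is a function of the
symbols in positions `v + R`. -/
def IsRecoverableD {Q : Type*} {d : ℕ} (R : Set (Fin d → ℤ))
    (X : Set ((Fin d → ℤ) → Q)) : Prop :=
  ∀ v : Fin d → ℤ, ∃ f : ((Fin d → ℤ) → Q) → Q,
    (∀ x y : (Fin d → ℤ) → Q, (∀ u ∈ R, x (v + u) = y (v + u)) → f x = f y) ∧
    ∀ x ∈ X, f x = x v

/-- `|B_{[n]^d}(X)|`: restrictions of elements of `X` to the cube `{0,…,n−1}^d`. -/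
noncomputable def blockCountD {Q : Type*} {d : ℕ} (X : Set ((Fin d → ℤ) → Q)) (n : ℕ) : ℕ :=
  Nat.card ↥((fun x : (Fin d → ℤ) → Q =>
    fun w : Fin d → Fin n => x (fun i => ((w i : ℕ) : ℤ))) '' X)

/-- The rate `R_q(X) = limsup_{n→∞} (1/n^d) log_q |B_{[n]^d}(X)|` (in `EReal`). -/
noncomputable def erateD (q : ℕ) {Q : Type*} {d : ℕ} (X : Set ((Fin d → ℤ) → Q)) : EReal :=
  Filter.limsup
    (fun n : ℕ => ((Real.logb q (blockCountD X n) / (n ^ d : ℕ) : ℝ) : EReal)) Filter.atTop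

/-- `Z^d_{R,n}`: the directed graph on `{0,…,n−1}^d` with an edge `v → w` iff `w − v ∈ R`. -/
def cubeGraphRel {d : ℕ} (R : Set (Fin d → ℤ)) (n : ℕ) :
    (Fin d → Fin n) → (Fin d → Fin n) → Prop :=
  fun v w => (fun i => ((w i : ℕ) : ℤ) - ((v i : ℕ) : ℤ)) ∈ R

/-- Extend a cube configuration to all of `ℤ^d` using `b` outside the cube. -/
noncomputable def extendFun {d n : ℕ} {Q : Type*} (b : (Fin d → ℤ) → Q)
    (y : (Fin d → Fin n) → Q) : (Fin d → ℤ) → Q := fun z =>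
  if h : ∀ i, 0 ≤ z i ∧ z i < (n : ℤ) then
    y (fun i => ⟨(z i).toNat, by have := h i; omega⟩)
  else b z

lemma keyStep {d q m n : ℕ} {Q : Type*} [Fintype Q] (hq : 2 ≤ q) (hQ : Fintype.card Q = q)
    (R : Set (Fin d → ℤ)) (hm : ∀ u ∈ R, ∀ i, (u i).natAbs ≤ m)
    (X : Set ((Fin d → ℤ) → Q)) (hX : IsRecoverableD R X) (hn : 1 ≤ n)
    (cn : ℝ)
    (hcn : ∀ C : Finset ((Fin d → Fin n) → Q),
      IsStorageCode (cubeGraphRel R n) (↑C : Set ((Fin d → Fin n) → Q)) →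
      Real.logb q (C.card : ℝ) / ((n ^ d : ℕ) : ℝ) ≤ cn) :
    Real.logb q (blockCountD X n) / ((n ^ d : ℕ) : ℝ) ≤
      cn + (((n + 2 * m) ^ d - n ^ d : ℕ) : ℝ) / ((n ^ d : ℕ) : ℝ) := by
  classical
  have hQne : Nonempty Q := Fintype.card_pos_iff.mp (by omega)
  have hq1 : (1 : ℝ) < (q : ℝ) := by exact_mod_cast (by omega : 1 < q)
  have hqpos : (0 : ℝ) < (q : ℝ) := by linarith
  have hnd : (0 : ℝ) < ((n ^ d : ℕ) : ℝ) := by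
    have : 0 < n ^ d := Nat.pow_pos (by omega)
    exact_mod_cast this
  have hcn0 : 0 ≤ cn := by
    have h := hcn ∅ (by
      intro v
      exact ⟨fun _ => Classical.arbitrary Q, fun _ _ _ => rfl, by simp⟩)
    simpa using h
  -- geometry
  set ι : (Fin d → Fin n) → (Fin d → ℤ) := fun v i => ((v i : ℕ) : ℤ) with hι
  set res : ((Fin d → ℤ) → Q) → ((Fin d → Fin n) → Q) := fun x w => x (ι w) with hres
  set BigF : Finset (Fin d → ℤ) :=
    Fintype.piFinset (fun _ : Fin d => Finset.Ico (-(m : ℤ)) ((n : ℤ) + m)) with hBigF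
  set CubeF : Finset (Fin d → ℤ) :=
    Fintype.piFinset (fun _ : Fin d => Finset.Ico (0 : ℤ) (n : ℤ)) with hCubeF
  set F : Finset (Fin d → ℤ) := BigF \ CubeF with hF
  have hsub : CubeF ⊆ BigF := by
    intro z hz
    rw [hCubeF, Fintype.mem_piFinset] at hz
    rw [hBigF, Fintype.mem_piFinset]
    intro i
    have := hz i
    rw [Finset.mem_Ico] at this ⊢
    omega
  have hFcard : F.card = (n + 2 * m) ^ d - n ^ d := by
    rw [hF, Finset.card_sdiff_of_subset hsub, hBigF, hCubeF]
    rw [Fintype.card_piFinset, Fintype.card_piFinset]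
    simp only [Int.card_Ico, Finset.prod_const, Finset.card_univ, Fintype.card_fin]
    congr 2 <;> omega
  -- the storage codes
  have hcode : ∀ b : {z // z ∈ F} → Q, IsStorageCode (cubeGraphRel R n)
      {y | ∃ x ∈ X, res x = y ∧ ∀ z : {z // z ∈ F}, x z.1 = b z} := by
    intro b v
    obtain ⟨g, hg1, hg2⟩ := hX (ι v)
    set bf : (Fin d → ℤ) → Q :=
      fun z => if hz : z ∈ F then b ⟨z, hz⟩ else Classical.arbitrary Q with hbf
    refine ⟨fun y => g (extendFun bf y), ?_, ?_⟩
    · intro y1 y2 hagree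
      apply hg1
      intro u hu
      by_cases h : ∀ i, 0 ≤ (ι v + u) i ∧ (ι v + u) i < (n : ℤ)
      · rw [extendFun, dif_pos h, extendFun, dif_pos h]
        apply hagree
        show (fun i => (((((ι v + u) i).toNat : ℕ) : ℤ)) - ((v i : ℕ) : ℤ)) ∈ R
        have he : (fun i => (((((ι v + u) i).toNat : ℕ) : ℤ)) - ((v i : ℕ) : ℤ)) = u := by
          funext i
          have h1 := h i
          simp only [hι, Pi.add_apply] at h1 ⊢
          omega
        rw [he]; exact hu
      · rw [extendFun, dif_neg h, extendFun, dif_neg h]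
    · rintro y ⟨x, hxX, hresx, hxb⟩
      have hext : g (extendFun bf y) = g x := by
        apply hg1
        intro u hu
        by_cases h : ∀ i, 0 ≤ (ι v + u) i ∧ (ι v + u) i < (n : ℤ)
        · rw [extendFun, dif_pos h, ← hresx]
          show x (ι _) = x (ι v + u)
          congr 1
          funext i
          have h1 := h i
          simp only [hι, Pi.add_apply] at h1 ⊢
          omega
        · rw [extendFun, dif_neg h]
          have hzF : (ι v + u) ∈ F := by
            rw [hF, Finset.mem_sdiff]
            constructor
            · rw [hBigF, Fintype.mem_piFinset]
              intro i
              have h1 := hm u hu i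
              have h2 := (v i).isLt
              rw [Finset.mem_Ico]
              simp only [hι, Pi.add_apply]
              omega
            · intro hmem
              apply h
              intro i
              rw [hCubeF, Fintype.mem_piFinset] at hmem
              have := hmem i
              rw [Finset.mem_Ico] at this
              exact this
          rw [hbf]
          simp only [dif_pos hzF]
          exact (hxb ⟨_, hzF⟩).symm
      show g (extendFun bf y) = y v
      rw [hext, hg2 x hxX, ← hresx]
  -- counting
  set Cb : ({z // z ∈ F} → Q) → Set ((Fin d → Fin n) → Q) :=
    fun b => {y | ∃ x ∈ X, res x = y ∧ ∀ z : {z // z ∈ F}, x z.1 = b z} with hCb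
  set CbF : ({z // z ∈ F} → Q) → Finset ((Fin d → Fin n) → Q) :=
    fun b => (Set.toFinite (Cb b)).toFinset with hCbF
  have hCbcard : ∀ b, ((CbF b).card : ℝ) ≤ (q : ℝ) ^ (((n ^ d : ℕ) : ℝ) * cn) := by
    intro b
    have h := hcn (CbF b) (by
      rw [hCbF]
      simp only [Set.Finite.coe_toFinset]
      exact hcode b)
    rcases Nat.eq_zero_or_pos (CbF b).card with h0 | hpos
    · rw [h0]
      push_cast
      exact (Real.rpow_pos_of_pos hqpos _).le
    · have hlog : Real.logb q ((CbF b).card : ℝ) ≤ ((n ^ d : ℕ) : ℝ) * cn := by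
        rw [div_le_iff₀ hnd] at h
        linarith
      exact (Real.logb_le_iff_le_rpow hq1 (by exact_mod_cast hpos)).mp hlog
  have hbcle : ((blockCountD X n : ℕ) : ℝ) ≤
      ((q ^ F.card : ℕ) : ℝ) * (q : ℝ) ^ (((n ^ d : ℕ) : ℝ) * cn) := by
    have h1 : blockCountD X n = (Set.toFinite (res '' X)).toFinset.card := by
      rw [blockCountD, Nat.card_coe_set_eq]
      exact Set.ncard_eq_toFinset_card _ _
    have hsubU : (Set.toFinite (res '' X)).toFinset ⊆
        Finset.univ.biUnion (fun b : {z // z ∈ F} → Q => CbF b) := by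
      intro y hy
      rw [Set.Finite.mem_toFinset] at hy
      obtain ⟨x, hxX, hxy⟩ := hy
      refine Finset.mem_biUnion.mpr ⟨fun z => x z.1, Finset.mem_univ _, ?_⟩
      rw [hCbF]
      rw [Set.Finite.mem_toFinset]
      exact ⟨x, hxX, hxy, fun z => rfl⟩
    have h2 : (blockCountD X n : ℝ) ≤
        ∑ b : {z // z ∈ F} → Q, ((CbF b).card : ℝ) := by
      rw [h1]
      push_cast
      have := (Finset.card_le_card hsubU).trans (Finset.card_biUnion_le)
      exact_mod_cast this
    calc (blockCountD X n : ℝ) ≤ ∑ b : {z // z ∈ F} → Q, ((CbF b).card : ℝ) := h2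
      _ ≤ ∑ _b : {z // z ∈ F} → Q, (q : ℝ) ^ (((n ^ d : ℕ) : ℝ) * cn) :=
          Finset.sum_le_sum fun b _ => hCbcard b
      _ = (Fintype.card ({z // z ∈ F} → Q) : ℝ) * (q : ℝ) ^ (((n ^ d : ℕ) : ℝ) * cn) := by
          rw [Finset.sum_const, Finset.card_univ, nsmul_eq_mul]
      _ = ((q ^ F.card : ℕ) : ℝ) * (q : ℝ) ^ (((n ^ d : ℕ) : ℝ) * cn) := by
          rw [Fintype.card_fun, Fintype.card_coe, hQ]
  have hlog2 : Real.logb q (blockCountD X n : ℝ) ≤ (F.card : ℝ) + ((n ^ d : ℕ) : ℝ) * cn := by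
    rcases Nat.eq_zero_or_pos (blockCountD X n) with h0 | hpos
    · rw [h0]
      simp only [Nat.cast_zero, Real.logb_zero]
      have h3 : (0 : ℝ) ≤ (F.card : ℝ) := by positivity
      have h4 := mul_nonneg hnd.le hcn0
      linarith
    · have hrw : ((q ^ F.card : ℕ) : ℝ) * (q : ℝ) ^ (((n ^ d : ℕ) : ℝ) * cn)
          = (q : ℝ) ^ ((F.card : ℝ) + ((n ^ d : ℕ) : ℝ) * cn) := by
        rw [Real.rpow_add hqpos, Real.rpow_natCast]
        push_cast
        ring
      refine (Real.logb_le_iff_le_rpow hq1 (by exact_mod_cast hpos)).mpr ?_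
      rw [← hrw]
      exact hbcle
  rw [← hFcard, div_le_iff₀ hnd, add_mul, div_mul_cancel₀ _ hnd.ne']
  linarith

/-- If every storage code on `Z^d_{R,n}` over an alphabet of size `q` has rate
at most `c_n`, then every `R`-recoverable system `X` on `ℤ^d` satisfies
`R_q(X) ≤ limsup c_n`. -/
theorem stmt11 (d : ℕ) (hd : 1 ≤ d) (R : Set (Fin d → ℤ)) (hRfin : R.Finite)
    (hR0 : (0 : Fin d → ℤ) ∉ R)
    (q : ℕ) (hq : 2 ≤ q) (Q : Type*) [Fintype Q] (hQ : Fintype.card Q = q)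
    (c : ℕ → ℝ)
    (hc : ∀ n : ℕ, 1 ≤ n → ∀ C : Finset ((Fin d → Fin n) → Q),
      IsStorageCode (cubeGraphRel R n) (↑C : Set ((Fin d → Fin n) → Q)) →
      Real.logb q (C.card : ℝ) / ((n ^ d : ℕ) : ℝ) ≤ c n)
    (X : Set ((Fin d → ℤ) → Q)) (hX : IsRecoverableD R X) :
    erateD q X ≤ Filter.limsup (fun n : ℕ => ((c n : ℝ) : EReal)) Filter.atTop := by
  classical
  set m : ℕ := hRfin.toFinset.sup (fun u => Finset.univ.sup fun i => (u i).natAbs) with hmdef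
  have hm : ∀ u ∈ R, ∀ i, (u i).natAbs ≤ m := by
    intro u hu i
    have h1 : (u i).natAbs ≤ Finset.univ.sup (fun i => (u i).natAbs) :=
      Finset.le_sup (f := fun j => (u j).natAbs) (Finset.mem_univ i)
    have h2 : Finset.univ.sup (fun i => (u i).natAbs) ≤ m :=
      Finset.le_sup (f := fun u => Finset.univ.sup fun i => (u i).natAbs)
        (hRfin.mem_toFinset.mpr hu)
    exact le_trans h1 h2
  set e : ℕ → ℝ := fun n => (((n + 2 * m) ^ d - n ^ d : ℕ) : ℝ) / ((n ^ d : ℕ) : ℝ) with hedef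
  have hkey : ∀ n, 1 ≤ n →
      Real.logb q (blockCountD X n) / ((n ^ d : ℕ) : ℝ) ≤ c n + e n :=
    fun n hn => keyStep hq hQ R hm X hX hn (c n) (hc n hn)
  have hetend : Filter.Tendsto e Filter.atTop (nhds 0) := by
    have h2 : Filter.Tendsto (fun n : ℕ => (2 * (m : ℝ)) / n) Filter.atTop (nhds 0) :=
      tendsto_const_div_atTop_nhds_zero_nat _
    have h1 : Filter.Tendsto (fun n : ℕ => (1 + 2 * (m : ℝ) / n) ^ d - 1)
        Filter.atTop (nhds 0) := by
      have h3 := ((h2.const_add 1).pow d).sub_const 1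
      simpa using h3
    apply h1.congr'
    filter_upwards [Filter.eventually_ge_atTop 1] with n hn
    have hn0 : (0 : ℝ) < (n : ℝ) := by exact_mod_cast hn
    have hle : n ^ d ≤ (n + 2 * m) ^ d := Nat.pow_le_pow_left (Nat.le_add_right n (2 * m)) d
    rw [hedef]
    push_cast [hle]
    field_simp
    rw [sub_mul, one_mul, div_pow, div_mul_cancel₀ _ (pow_ne_zero d hn0.ne')]
  have helimsup : Filter.limsup (fun n : ℕ => ((e n : ℝ) : EReal)) Filter.atTop = 0 := by
    have : Filter.Tendsto (fun n : ℕ => ((e n : ℝ) : EReal)) Filter.atTop (nhds ((0 : ℝ) : EReal)) :=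
      EReal.tendsto_coe.mpr hetend
    rw [EReal.coe_zero] at this
    exact this.limsup_eq
  have hA : (fun n : ℕ => ((Real.logb q (blockCountD X n) / ((n ^ d : ℕ) : ℝ) : ℝ) : EReal))
      ≤ᶠ[Filter.atTop] fun n : ℕ => ((c n : ℝ) : EReal) + ((e n : ℝ) : EReal) := by
    filter_upwards [Filter.eventually_ge_atTop 1] with n hn
    rw [← EReal.coe_add]
    exact EReal.coe_le_coe_iff.mpr (hkey n hn)
  calc erateD q X
      ≤ Filter.limsup (fun n : ℕ => ((c n : ℝ) : EReal) + ((e n : ℝ) : EReal)) Filter.atTop :=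
        Filter.limsup_le_limsup hA
    _ ≤ Filter.limsup (fun n : ℕ => ((c n : ℝ) : EReal)) Filter.atTop +
        Filter.limsup (fun n : ℕ => ((e n : ℝ) : EReal)) Filter.atTop := by
        apply EReal.limsup_add_le
        · right; rw [helimsup]; exact EReal.zero_ne_top
        · right; rw [helimsup]; exact EReal.zero_ne_bot
    _ = Filter.limsup (fun n : ℕ => ((c n : ℝ) : EReal)) Filter.atTop := by
        rw [helimsup, add_zero]
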